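/- Let H : [0,1]^n → ℝ be continuous and submodular, E a set of pairs of indices, 𝒳 = { x ∈ [0,1]^n : x_i ≥ x_j for all (i,j) ∈ E }, and h the extension to tuples of probability measures. Then the infimum of h(μ) over tuples μ of probability measures on [0,1] satisfying μ_i ≽ μ_j (stochastic dominance) for all (i,j) ∈ E equals the infimum of H over 𝒳. Moreover, μ is a minimizer of the measure problem if and only if (F_{μ_1}^{-1}(t),…,F_{μ_n}^{-1}(t)) is a minimizer of H over 𝒳 for almost all t ∈ [0,1]. -/

import Mathlib

open MeasureTheory

/-- Inverse reversed cumulative distribution function of a measure on [0,1]. -/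
noncomputable def invCDF15 (μ : Measure ℝ) (t : ℝ) : ℝ :=
  sSup {x ∈ Set.Icc (0:ℝ) 1 | t ≤ (μ (Set.Icc x 1)).toReal}

/-- The extension of `H` to tuples of probability measures on [0,1]. -/
noncomputable def ext15 {n : ℕ} (H : (Fin n → ℝ) → ℝ) (μ : Fin n → Measure ℝ) : ℝ :=
  ∫ t in Set.Icc (0:ℝ) 1, H (fun i => invCDF15 (μ i) t)

lemma invCDF15_mem (μ : Measure ℝ) (t : ℝ) : invCDF15 μ t ∈ Set.Icc (0:ℝ) 1 :=
  ⟨Real.sSup_nonneg fun x hx => hx.1.1, Real.sSup_le (fun x hx => hx.1.2) zero_le_one⟩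

lemma invCDF15_antitone (μ : Measure ℝ) : Antitone (invCDF15 μ) := by
  intro a b hab
  unfold invCDF15
  by_cases h : {x ∈ Set.Icc (0:ℝ) 1 | b ≤ (μ (Set.Icc x 1)).toReal}.Nonempty
  · exact csSup_le_csSup ⟨1, fun x hx => hx.1.2⟩ h fun x hx => ⟨hx.1, hab.trans hx.2⟩
  · rw [Set.not_nonempty_iff_eq_empty] at h
    rw [h, Real.sSup_empty]
    exact Real.sSup_nonneg fun x hx => hx.1.1

lemma integrableOn_Hw15 {n : ℕ} {H : (Fin n → ℝ) → ℝ}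
    (hH : ContinuousOn H (Set.univ.pi fun _ : Fin n => Set.Icc (0:ℝ) 1))
    (μ : Fin n → Measure ℝ) :
    IntegrableOn (fun t => H (fun i => invCDF15 (μ i) t)) (Set.Icc (0:ℝ) 1) volume := by
  set cube := Set.univ.pi fun _ : Fin n => Set.Icc (0:ℝ) 1 with hcube
  have hwmem : ∀ t : ℝ, (fun i => invCDF15 (μ i) t) ∈ cube := fun t =>
    Set.mem_univ_pi.2 fun i => invCDF15_mem (μ i) t
  have hwmeas : Measurable (fun t => (fun i => invCDF15 (μ i) t)) :=
    measurable_pi_lambda _ fun i => (invCDF15_antitone (μ i)).measurable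
  have hHw : Measurable (fun t => H (fun i => invCDF15 (μ i) t)) := by
    have h1 : Measurable (fun t => (⟨fun i => invCDF15 (μ i) t, hwmem t⟩ : cube)) :=
      hwmeas.subtype_mk
    have h2 : Continuous (cube.restrict H) := continuousOn_iff_continuous_restrict.mp hH
    exact h2.measurable.comp h1
  have hcpt : IsCompact cube := isCompact_univ_pi fun _ => isCompact_Icc
  have hne : cube.Nonempty := ⟨fun _ => 0, Set.mem_univ_pi.2 fun _ => ⟨le_refl 0, zero_le_one⟩⟩
  obtain ⟨z, hz, hmax⟩ := hcpt.exists_isMaxOn hne hH.abs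
  refine Integrable.mono' (g := fun _ => |H z|) (integrableOn_const ?_)
    hHw.aestronglyMeasurable ?_
  · rw [Real.volume_Icc]; exact ENNReal.ofReal_ne_top
  · exact Filter.Eventually.of_forall fun t => by
      simpa [Real.norm_eq_abs] using isMaxOn_iff.mp hmax _ (hwmem t)

lemma invCDF15_mono {μ ν : Measure ℝ} (hν : ν (Set.Icc (0:ℝ) 1) = 1) {t : ℝ} (ht : t ≤ 1)
    (hdom : ∀ z ∈ Set.Icc (0:ℝ) 1, (ν (Set.Icc z 1)).toReal ≤ (μ (Set.Icc z 1)).toReal) :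
    invCDF15 ν t ≤ invCDF15 μ t := by
  unfold invCDF15
  refine csSup_le_csSup ⟨1, fun x hx => hx.1.2⟩ ⟨0, ⟨⟨le_refl 0, zero_le_one⟩, by simp [hν, ht]⟩⟩
    fun x hx => ⟨hx.1, hx.2.trans (hdom x hx.1)⟩

lemma invCDF15_dirac {x t : ℝ} (hx : x ∈ Set.Icc (0:ℝ) 1) (ht : t ∈ Set.Ioc (0:ℝ) 1) :
    invCDF15 (Measure.dirac x) t = x := by
  have hset : {y ∈ Set.Icc (0:ℝ) 1 | t ≤ ((Measure.dirac x) (Set.Icc y 1)).toReal}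
      = Set.Icc 0 x := by
    ext y
    simp only [Set.mem_setOf_eq, Set.mem_Icc, Measure.dirac_apply, Set.indicator_apply,
      Set.mem_Icc, Pi.one_apply]
    constructor
    · rintro ⟨⟨hy0, hy1⟩, hty⟩
      refine ⟨hy0, ?_⟩
      by_contra hxy
      push_neg at hxy
      rw [if_neg (by push_neg; intro h; exact absurd h (not_le.2 hxy))] at hty
      simp at hty
      exact absurd (hty.trans_lt ht.1).false (by simp)
    · rintro ⟨hy0, hyx⟩
      exact ⟨⟨hy0, hyx.trans hx.2⟩, by rw [if_pos ⟨hyx, hx.2⟩]; simpa using ht.2⟩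
  unfold invCDF15
  rw [hset, csSup_Icc hx.1]

theorem stmt_15 (n : ℕ) (H : (Fin n → ℝ) → ℝ)
    (hH : ContinuousOn H (Set.univ.pi fun _ : Fin n => Set.Icc (0:ℝ) 1))
    (hsub : ∀ x y : Fin n → ℝ, (∀ m, x m ∈ Set.Icc (0:ℝ) 1) → (∀ m, y m ∈ Set.Icc (0:ℝ) 1) →
      H x + H y ≥ H (fun m => min (x m) (y m)) + H (fun m => max (x m) (y m)))
    (E : Set (Fin n × Fin n)) :
    -- the feasible sets
    (let 𝒳 : Set (Fin n → ℝ) :=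
        {x | (∀ i, x i ∈ Set.Icc (0:ℝ) 1) ∧ ∀ p ∈ E, x p.2 ≤ x p.1};
     let ℳ : Set (Fin n → Measure ℝ) :=
        {μ | (∀ i, IsProbabilityMeasure (μ i) ∧ μ i (Set.Icc (0:ℝ) 1) = 1) ∧
          ∀ p ∈ E, ∀ z ∈ Set.Icc (0:ℝ) 1,
            ((μ p.2) (Set.Icc z 1)).toReal ≤ ((μ p.1) (Set.Icc z 1)).toReal};
     sInf (ext15 H '' ℳ) = sInf (H '' 𝒳) ∧
     ∀ μ ∈ ℳ, (ext15 H μ = sInf (ext15 H '' ℳ) ↔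
        ∀ᵐ t ∂(volume.restrict (Set.Icc (0:ℝ) 1)),
          (fun i => invCDF15 (μ i) t) ∈ 𝒳 ∧
            H (fun i => invCDF15 (μ i) t) = sInf (H '' 𝒳))) := by
  intro 𝒳 ℳ
  -- compactness of 𝒳 and existence of a minimizer x₀
  have hcube : IsCompact (Set.univ.pi fun _ : Fin n => Set.Icc (0:ℝ) 1) :=
    isCompact_univ_pi fun _ => isCompact_Icc
  have hXsub : 𝒳 ⊆ Set.univ.pi fun _ : Fin n => Set.Icc (0:ℝ) 1 := fun x hx =>
    Set.mem_univ_pi.2 hx.1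
  have hXcl : IsClosed 𝒳 := by
    have : 𝒳 = (⋂ i, {x : Fin n → ℝ | x i ∈ Set.Icc (0:ℝ) 1}) ∩
        ⋂ p ∈ E, {x : Fin n → ℝ | x p.2 ≤ x p.1} := by
      ext x; simp [𝒳, Set.mem_iInter]
    rw [this]
    exact IsClosed.inter
      (isClosed_iInter fun i => isClosed_Icc.preimage (continuous_apply i))
      (isClosed_iInter fun p => isClosed_iInter fun _ =>
        isClosed_le (continuous_apply p.2) (continuous_apply p.1))
  have hXcpt : IsCompact 𝒳 := hcube.of_isClosed_subset hXcl hXsub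
  have hXne : 𝒳.Nonempty := ⟨fun _ => 0, fun _ => ⟨le_refl 0, zero_le_one⟩, fun _ _ => le_refl 0⟩
  obtain ⟨x₀, hx₀X, hx₀min⟩ := hXcpt.exists_isMinOn hXne (hH.mono hXsub)
  have hx₀min' : ∀ y ∈ 𝒳, H x₀ ≤ H y := isMinOn_iff.mp hx₀min
  have hsInfX : sInf (H '' 𝒳) = H x₀ :=
    IsLeast.csInf_eq ⟨⟨x₀, hx₀X, rfl⟩, by rintro _ ⟨y, hy, rfl⟩; exact hx₀min' y hy⟩
  have hvol : ((volume : Measure ℝ) (Set.Icc (0:ℝ) 1)).toReal = 1 := by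
    simp [Real.volume_Icc]
  have hvolfin : (volume : Measure ℝ) (Set.Icc (0:ℝ) 1) < ⊤ := by
    rw [Real.volume_Icc]; exact ENNReal.ofReal_lt_top
  -- membership of inverse CDF vectors in 𝒳
  have hX : ∀ μ ∈ ℳ, ∀ t ∈ Set.Icc (0:ℝ) 1, (fun i => invCDF15 (μ i) t) ∈ 𝒳 := by
    intro μ hμ t ht
    refine ⟨fun i => invCDF15_mem (μ i) t, fun p hp => ?_⟩
    exact invCDF15_mono (hμ.1 p.2).2 ht.2 (fun z hz => hμ.2 p hp z hz)
  -- lower bound : H x₀ ≤ ext15 H μ for μ ∈ ℳ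
  have hlb : ∀ μ ∈ ℳ, H x₀ ≤ ext15 H μ := by
    intro μ hμ
    have h1 : H x₀ = ∫ _ in Set.Icc (0:ℝ) 1, H x₀ := by rw [setIntegral_const, measureReal_def, hvol, one_smul]
    rw [h1]
    exact setIntegral_mono_on (integrableOn_const hvolfin.ne)
      (integrableOn_Hw15 hH μ) measurableSet_Icc
      (fun t ht => hx₀min' _ (hX μ hμ t ht))
  -- the Dirac tuple
  have hdiracℳ : (fun i => Measure.dirac (x₀ i)) ∈ ℳ := by
    refine ⟨fun i => ⟨inferInstance, by
      simp [Measure.dirac_apply, Set.indicator_of_mem (hx₀X.1 i)]⟩, ?_⟩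
    intro p hp z hz
    by_cases h2 : x₀ p.2 ∈ Set.Icc z 1
    · have h1 : x₀ p.1 ∈ Set.Icc z 1 := ⟨h2.1.trans (hx₀X.2 p hp), (hx₀X.1 p.1).2⟩
      simp [Measure.dirac_apply, Set.indicator_of_mem h1, Set.indicator_of_mem h2]
    · simp [Measure.dirac_apply, Set.indicator_of_notMem h2]
  -- a.e. t ∈ Ioc 0 1
  have haeIoc : ∀ᵐ t ∂(volume.restrict (Set.Icc (0:ℝ) 1)), t ∈ Set.Ioc (0:ℝ) 1 := by
    have h1 : ∀ᵐ t ∂(volume.restrict (Set.Icc (0:ℝ) 1)), t ∈ Set.Icc (0:ℝ) 1 :=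
      ae_restrict_mem measurableSet_Icc
    have h2 : ∀ᵐ t ∂(volume.restrict (Set.Icc (0:ℝ) 1)), t ≠ 0 := by
      have hz0 : volume.restrict (Set.Icc (0:ℝ) 1) {(0:ℝ)} = 0 := by
        rw [Measure.restrict_apply (measurableSet_singleton 0)]
        exact measure_mono_null Set.inter_subset_left (by simp)
      rw [ae_iff]
      refine measure_mono_null (fun a ha => ?_) hz0
      simpa using ha
    filter_upwards [h1, h2] with t ht hne
    exact ⟨lt_of_le_of_ne ht.1 (Ne.symm hne), ht.2⟩
  -- value at the Dirac tuple
  have hdiracval : ext15 H (fun i => Measure.dirac (x₀ i)) = H x₀ := by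
    have hcong : (fun t => H (fun i => invCDF15 (Measure.dirac (x₀ i)) t))
        =ᵐ[volume.restrict (Set.Icc (0:ℝ) 1)] fun _ => H x₀ := by
      filter_upwards [haeIoc] with t ht
      rw [show (fun i => invCDF15 (Measure.dirac (x₀ i)) t) = x₀ from
        funext fun i => invCDF15_dirac (hx₀X.1 i) ht]
    show (∫ t in Set.Icc (0:ℝ) 1, H (fun i => invCDF15 (Measure.dirac (x₀ i)) t)) = H x₀
    rw [integral_congr_ae hcong, setIntegral_const, measureReal_def, hvol, one_smul]
  have hsInfM : sInf (ext15 H '' ℳ) = H x₀ :=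
    IsLeast.csInf_eq ⟨⟨_, hdiracℳ, hdiracval⟩, by rintro _ ⟨μ, hμ, rfl⟩; exact hlb μ hμ⟩
  refine ⟨hsInfM.trans hsInfX.symm, ?_⟩
  intro μ hμ
  rw [hsInfM, hsInfX]
  have hintf : IntegrableOn (fun t => H (fun i => invCDF15 (μ i) t)) (Set.Icc (0:ℝ) 1) volume :=
    integrableOn_Hw15 hH μ
  have hintc : IntegrableOn (fun _ : ℝ => H x₀) (Set.Icc (0:ℝ) 1) volume :=
    integrableOn_const hvolfin.ne
  have hmemae : ∀ᵐ t ∂(volume.restrict (Set.Icc (0:ℝ) 1)),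
      (fun i => invCDF15 (μ i) t) ∈ 𝒳 := by
    filter_upwards [ae_restrict_mem measurableSet_Icc] with t ht
    exact hX μ hμ t ht
  constructor
  · intro h
    have h' : (∫ t in Set.Icc (0:ℝ) 1, H (fun i => invCDF15 (μ i) t)) = H x₀ := h
    have hzero : ∫ t in Set.Icc (0:ℝ) 1, (H (fun i => invCDF15 (μ i) t) - H x₀) = 0 := by
      rw [integral_sub hintf hintc, h', setIntegral_const, measureReal_def, hvol, one_smul, sub_self]
    have hnn : 0 ≤ᵐ[volume.restrict (Set.Icc (0:ℝ) 1)]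
        fun t => H (fun i => invCDF15 (μ i) t) - H x₀ := by
      filter_upwards [hmemae] with t ht
      exact sub_nonneg.2 (hx₀min' _ ht)
    have heq := (integral_eq_zero_iff_of_nonneg_ae hnn (hintf.sub hintc)).mp hzero
    filter_upwards [hmemae, heq] with t ht hteq
    exact ⟨ht, sub_eq_zero.mp hteq⟩
  · intro h
    have hcong : (fun t => H (fun i => invCDF15 (μ i) t))
        =ᵐ[volume.restrict (Set.Icc (0:ℝ) 1)] fun _ => H x₀ := by
      filter_upwards [h] with t ht using ht.2
    show (∫ t in Set.Icc (0:ℝ) 1, H (fun i => invCDF15 (μ i) t)) = H x₀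
    rw [integral_congr_ae hcong, setIntegral_const, measureReal_def, hvol, one_smul]
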